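/- The group Sp(2n,ℝ) acts on the Siegel upper half-space 𝔥_n by generalized Möbius transformations: if T = [[A,B],[C,D]] ∈ Sp(2n,ℝ) and Z ∈ 𝔥_n, then A + BZ is invertible and Z' = (C + DZ)(A + BZ)^{-1} again lies in 𝔥_n (i.e., Z' is complex symmetric with positive definite imaginary part). -/

import Mathlib

open Matrix

section SiegelAux

/-- Key algebraic identity from the symplectic relations. -/
lemma sieg_key {n : ℕ} (a b c d : Matrix (Fin n) (Fin n) ℂ)
    (h1 : aᵀ*c - cᵀ*a = 0) (h2 : bᵀ*d - dᵀ*b = 0) (h3 : aᵀ*d - cᵀ*b = 1)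
    (h4 : bᵀ*c - dᵀ*a = -1)
    (W W' : Matrix (Fin n) (Fin n) ℂ) (hW : Wᵀ = W) :
    (a + b*W)ᵀ * (c + d*W') - (c + d*W)ᵀ * (a + b*W') = W' - W := by
  have expand : (a + b*W)ᵀ * (c + d*W') - (c + d*W)ᵀ * (a + b*W')
      = (aᵀ*c - cᵀ*a) + (aᵀ*d - cᵀ*b) * W' + W * (bᵀ*c - dᵀ*a)
        + W * ((bᵀ*d - dᵀ*b) * W') := by
    rw [transpose_add, transpose_add, transpose_mul, transpose_mul, hW]
    noncomm_ring
  rw [expand, h1, h2, h3, h4]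
  noncomm_ring

/-- Real part of the complex quadratic form of a real matrix. -/
lemma sieg_re_quad {n : ℕ} (Y : Matrix (Fin n) (Fin n) ℝ) (v : Fin n → ℂ) :
    (star v ⬝ᵥ ((Y.map (fun x => (x:ℂ))) *ᵥ v)).re =
      (fun i => (v i).re) ⬝ᵥ Y *ᵥ (fun i => (v i).re)
      + (fun i => (v i).im) ⬝ᵥ Y *ᵥ (fun i => (v i).im) := by
  simp only [dotProduct, mulVec, Pi.star_apply, Matrix.map_apply]
  rw [Complex.re_sum]
  rw [← Finset.sum_add_distrib]
  refine Finset.sum_congr rfl fun i _ => ?_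
  simp only [Finset.mul_sum, Complex.re_sum, dotProduct]
  rw [← Finset.sum_add_distrib]
  refine Finset.sum_congr rfl fun j _ => ?_
  simp [Complex.mul_re, Complex.mul_im]

lemma sieg_re_pos {n : ℕ} {Y : Matrix (Fin n) (Fin n) ℝ} (hY : Y.PosDef)
    (v : Fin n → ℂ) (hv : v ≠ 0) :
    0 < (star v ⬝ᵥ ((Y.map (fun x => (x:ℂ))) *ᵥ v)).re := by
  rw [sieg_re_quad]
  set vr := fun i => (v i).re
  set vi := fun i => (v i).im
  have hne : vr ≠ 0 ∨ vi ≠ 0 := by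
    by_contra h
    push_neg at h
    apply hv
    funext i
    have h1 := congrFun h.1 i
    have h2 := congrFun h.2 i
    simp only [vr, vi, Pi.zero_apply] at h1 h2
    exact Complex.ext h1 h2
  have hr : ∀ x : Fin n → ℝ, 0 ≤ x ⬝ᵥ Y *ᵥ x := by
    intro x
    simpa using hY.posSemidef.dotProduct_mulVec_nonneg x
  rcases hne with h | h
  · have := hY.dotProduct_mulVec_pos h
    simp only [star_trivial] at this ⊢
    linarith [hr vi]
  · have := hY.dotProduct_mulVec_pos h
    simp only [star_trivial] at this ⊢
    linarith [hr vr]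

end SiegelAux

/-- The standard `2n × 2n` symplectic form `Ω = [[0, Iₙ], [-Iₙ, 0]]`. -/
def Omega (n : ℕ) : Matrix (Fin n ⊕ Fin n) (Fin n ⊕ Fin n) ℝ :=
  Matrix.fromBlocks 0 1 (-1) 0

/-- Membership in the Siegel upper half-space `𝔥ₙ`: complex symmetric with
positive definite imaginary part. -/
def InSiegel (n : ℕ) (Z : Matrix (Fin n) (Fin n) ℂ) : Prop :=
  Z.IsSymm ∧ (Z.map Complex.im).PosDef

/-- `Sp(2n,ℝ)` acts on the Siegel upper half-space by Möbius transformations: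
if `T = [[A,B],[C,D]]` is symplectic and `Z ∈ 𝔥ₙ`, then `A + BZ` is invertible and
`Z' = (C + DZ)(A + BZ)⁻¹ ∈ 𝔥ₙ`. -/
theorem stmt9 (n : ℕ) (A B C D : Matrix (Fin n) (Fin n) ℝ)
    (hT : (Matrix.fromBlocks A B C D)ᵀ * Omega n * Matrix.fromBlocks A B C D = Omega n)
    (Z : Matrix (Fin n) (Fin n) ℂ) (hZ : InSiegel n Z) :
    IsUnit (A.map (fun x => (x : ℂ)) + B.map (fun x => (x : ℂ)) * Z) ∧
    InSiegel n ((C.map (fun x => (x : ℂ)) + D.map (fun x => (x : ℂ)) * Z) *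
      (A.map (fun x => (x : ℂ)) + B.map (fun x => (x : ℂ)) * Z)⁻¹) := by
  obtain ⟨hZs, hY⟩ := hZ
  have hZt : Zᵀ = Z := hZs
  set Y : Matrix (Fin n) (Fin n) ℝ := Z.map Complex.im with hYdef
  -- extract the real block relations
  simp only [Omega, Matrix.fromBlocks_transpose, Matrix.fromBlocks_multiply,
    Matrix.mul_zero, Matrix.zero_mul, Matrix.mul_one, Matrix.one_mul,
    Matrix.mul_neg, Matrix.neg_mul, add_zero, zero_add, mul_zero, zero_mul,
    mul_one, mul_neg, neg_mul] at hT
  have h11 := congrArg Matrix.toBlocks₁₁ hT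
  have h12 := congrArg Matrix.toBlocks₁₂ hT
  have h22 := congrArg Matrix.toBlocks₂₂ hT
  simp only [Matrix.toBlocks_fromBlocks₁₁, Matrix.toBlocks_fromBlocks₁₂,
    Matrix.toBlocks_fromBlocks₂₂] at h11 h12 h22
  have hAC : Aᵀ*C - Cᵀ*A = 0 := by linear_combination (norm := noncomm_ring) h11
  have hBD : Bᵀ*D - Dᵀ*B = 0 := by linear_combination (norm := noncomm_ring) h22
  have hAD : Aᵀ*D - Cᵀ*B = 1 := by linear_combination (norm := noncomm_ring) h12
  -- complexify the blocks
  set a := A.map (fun x => (x : ℂ)) with ha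
  set b := B.map (fun x => (x : ℂ)) with hb
  set c := C.map (fun x => (x : ℂ)) with hc
  set d := D.map (fun x => (x : ℂ)) with hd
  have cpx : ∀ (P Q : Matrix (Fin n) (Fin n) ℝ) (R : Matrix (Fin n) (Fin n) ℝ)
      (S : Matrix (Fin n) (Fin n) ℝ), Pᵀ*Q - Rᵀ*S = 1 →
      (P.map (fun x => (x:ℂ)))ᵀ * (Q.map (fun x => (x:ℂ)))
        - (R.map (fun x => (x:ℂ)))ᵀ * (S.map (fun x => (x:ℂ))) = 1 := by
    intro P Q R S h
    have := congrArg (Complex.ofRealHom.mapMatrix) h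
    simp only [_root_.map_sub, _root_.map_mul, _root_.map_one,
      RingHom.mapMatrix_apply] at this
    simp [Matrix.transpose_map, Complex.ofRealHom_eq_coe] at this ⊢
    exact this
  have cpx0 : ∀ (P Q : Matrix (Fin n) (Fin n) ℝ) (R : Matrix (Fin n) (Fin n) ℝ)
      (S : Matrix (Fin n) (Fin n) ℝ), Pᵀ*Q - Rᵀ*S = 0 →
      (P.map (fun x => (x:ℂ)))ᵀ * (Q.map (fun x => (x:ℂ)))
        - (R.map (fun x => (x:ℂ)))ᵀ * (S.map (fun x => (x:ℂ))) = 0 := by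
    intro P Q R S h
    have := congrArg (Complex.ofRealHom.mapMatrix) h
    simp only [_root_.map_sub, _root_.map_mul, _root_.map_zero,
      RingHom.mapMatrix_apply] at this
    simp [Matrix.transpose_map, Complex.ofRealHom_eq_coe] at this ⊢
    exact this
  have h1 : aᵀ*c - cᵀ*a = 0 := cpx0 A C C A hAC
  have h2 : bᵀ*d - dᵀ*b = 0 := cpx0 B D D B hBD
  have h3 : aᵀ*d - cᵀ*b = 1 := cpx A D C B hAD
  have h4 : bᵀ*c - dᵀ*a = -1 := by
    have ht := congrArg Matrix.transpose h3
    simp only [transpose_sub, transpose_mul, transpose_transpose,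
      transpose_one] at ht
    linear_combination (norm := noncomm_ring) -ht
  -- conjugate of Z and basic facts
  set Zb : Matrix (Fin n) (Fin n) ℂ := Z.map (starRingEnd ℂ) with hZb
  have hZbt : Zbᵀ = Zb := by
    rw [hZb, ← Matrix.transpose_map, hZt]
  set M : Matrix (Fin n) (Fin n) ℂ := a + b * Z with hM
  set N : Matrix (Fin n) (Fin n) ℂ := c + d * Z with hN
  have E1 : Mᵀ * N - Nᵀ * M = 0 := by
    have := sieg_key a b c d h1 h2 h3 h4 Z Z hZt
    rw [this, sub_self]
  -- conjugate transposes
  have hreal : ∀ P : Matrix (Fin n) (Fin n) ℝ,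
      (P.map (fun x => (x:ℂ)))ᴴ = (P.map (fun x => (x:ℂ)))ᵀ := by
    intro P
    ext i j
    simp [Matrix.conjTranspose_apply, Matrix.map_apply, Complex.conj_ofReal]
  have hZH : Zᴴ = Zb := by
    ext i j
    have : Z j i = Z i j := by
      rw [← Matrix.transpose_apply Z i j, hZt]
    simp [Matrix.conjTranspose_apply, hZb, Matrix.map_apply, this]
  have hMH : Mᴴ = (a + b * Zb)ᵀ := by
    rw [hM, conjTranspose_add, conjTranspose_mul, hreal A, hreal B, hZH,
      transpose_add, transpose_mul, hZbt]
  have hNH : Nᴴ = (c + d * Zb)ᵀ := by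
    rw [hN, conjTranspose_add, conjTranspose_mul, hreal C, hreal D, hZH,
      transpose_add, transpose_mul, hZbt]
  -- the positivity identity
  set Yc : Matrix (Fin n) (Fin n) ℂ := Y.map (fun x => (x:ℂ)) with hYc
  have hZZb : Z - Zb = (2 * Complex.I) • Yc := by
    ext i j
    simp only [Matrix.sub_apply, hZb, hYc, Matrix.map_apply, Matrix.smul_apply,
      smul_eq_mul]
    rw [Complex.sub_conj]
    simp only [hYdef, Matrix.map_apply]
    push_cast
    ring
  have E2 : Mᴴ * N - Nᴴ * M = (2 * Complex.I) • Yc := by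
    rw [hMH, hNH, ← hZZb]
    exact sieg_key a b c d h1 h2 h3 h4 Zb Z hZbt
  -- invertibility of M
  have hdet : M.det ≠ 0 := by
    intro h0
    obtain ⟨v, hv, hMv⟩ := (Matrix.exists_mulVec_eq_zero_iff).mpr h0
    have t1 : star v ⬝ᵥ ((Mᴴ * N) *ᵥ v) = 0 := by
      rw [← Matrix.mulVec_mulVec, Matrix.dotProduct_mulVec, ← Matrix.star_mulVec,
        hMv]
      simp
    have t2 : star v ⬝ᵥ ((Nᴴ * M) *ᵥ v) = 0 := by
      rw [← Matrix.mulVec_mulVec, hMv]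
      simp
    have hq : star v ⬝ᵥ (((2 * Complex.I) • Yc) *ᵥ v) = 0 := by
      rw [← E2, Matrix.sub_mulVec, dotProduct_sub, t1, t2, sub_zero]
    rw [Matrix.smul_mulVec, dotProduct_smul, smul_eq_mul] at hq
    have h2I : (2 * Complex.I) ≠ 0 := by
      simp [Complex.I_ne_zero]
    have hq0 : star v ⬝ᵥ (Yc *ᵥ v) = 0 := by
      rcases mul_eq_zero.mp hq with h | h
      · exact absurd h h2I
      · exact h
    have hpos := sieg_re_pos hY v hv
    rw [hYc] at hq0
    rw [hq0] at hpos
    simp at hpos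
  have hdetU : IsUnit M.det := Ne.isUnit hdet
  have hUnit : IsUnit M := (Matrix.isUnit_iff_isUnit_det M).mpr hdetU
  have hMM : M * M⁻¹ = 1 := Matrix.mul_nonsing_inv M hdetU
  have hM'M : M⁻¹ * M = 1 := Matrix.nonsing_inv_mul M hdetU
  -- symmetry of Z' = N * M⁻¹
  have hMtdet : IsUnit Mᵀ.det := by rwa [Matrix.det_transpose]
  have hMN : Mᵀ * N = Nᵀ * M := by linear_combination (norm := noncomm_ring) E1
  have hNt : Nᵀ = Mᵀ * (N * M⁻¹) :=
    calc Nᵀ = Nᵀ * (M * M⁻¹) := by rw [hMM, Matrix.mul_one]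
      _ = (Nᵀ * M) * M⁻¹ := by rw [Matrix.mul_assoc]
      _ = (Mᵀ * N) * M⁻¹ := by rw [hMN]
      _ = Mᵀ * (N * M⁻¹) := by rw [Matrix.mul_assoc]
  have hZ't : (N * M⁻¹)ᵀ = N * M⁻¹ :=
    calc (N * M⁻¹)ᵀ = (M⁻¹)ᵀ * Nᵀ := by rw [transpose_mul]
      _ = (Mᵀ)⁻¹ * (Mᵀ * (N * M⁻¹)) := by rw [Matrix.transpose_nonsing_inv, hNt]
      _ = ((Mᵀ)⁻¹ * Mᵀ) * (N * M⁻¹) := by rw [Matrix.mul_assoc]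
      _ = N * M⁻¹ := by rw [Matrix.nonsing_inv_mul _ hMtdet, Matrix.one_mul]
  -- the matrix of imaginary parts of Z'
  have hMH'M : (M⁻¹)ᴴ * Mᴴ = 1 := by
    rw [← conjTranspose_mul, hMM, conjTranspose_one]
  set Wm : Matrix (Fin n) (Fin n) ℂ := (M⁻¹)ᴴ * Yc * M⁻¹ with hWm
  have heq : N * M⁻¹ - (N * M⁻¹)ᴴ = (2 * Complex.I) • Wm := by
    have expand : (M⁻¹)ᴴ * (Mᴴ * N - Nᴴ * M) * M⁻¹
        = ((M⁻¹)ᴴ * Mᴴ) * (N * M⁻¹) - (M⁻¹)ᴴ * Nᴴ * (M * M⁻¹) := by noncomm_ring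
    calc N * M⁻¹ - (N * M⁻¹)ᴴ
        = ((M⁻¹)ᴴ * Mᴴ) * (N * M⁻¹) - (M⁻¹)ᴴ * Nᴴ * (M * M⁻¹) := by
          rw [hMH'M, hMM, Matrix.one_mul, Matrix.mul_one, conjTranspose_mul]
      _ = (M⁻¹)ᴴ * (Mᴴ * N - Nᴴ * M) * M⁻¹ := expand.symm
      _ = (M⁻¹)ᴴ * ((2 * Complex.I) • Yc) * M⁻¹ := by rw [E2]
      _ = (2 * Complex.I) • Wm := by rw [Matrix.mul_smul, Matrix.smul_mul, hWm]
  have h2I : (2 * Complex.I) ≠ 0 := by simp [Complex.I_ne_zero]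
  have himW : ((N * M⁻¹).map Complex.im).map (fun x => (x:ℂ)) = Wm := by
    ext i j
    have hij : (N * M⁻¹ - (N * M⁻¹)ᴴ) i j = ((2 * Complex.I) • Wm) i j := by
      rw [heq]
    have hsymm : (N * M⁻¹) j i = (N * M⁻¹) i j := by
      rw [← Matrix.transpose_apply (N * M⁻¹) i j, hZ't]
    simp only [Matrix.sub_apply, Matrix.smul_apply, Matrix.conjTranspose_apply,
      smul_eq_mul, hsymm, Complex.star_def, Complex.sub_conj] at hij
    simp only [Matrix.map_apply]
    refine mul_left_cancel₀ h2I ?_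
    rw [← hij]
    push_cast
    ring
  refine ⟨hUnit, hZ't, Matrix.posDef_iff_dotProduct_mulVec.mpr ⟨?_, ?_⟩⟩
  · -- hermitian (symmetric real) part
    ext i j
    have hsymm : (N * M⁻¹) j i = (N * M⁻¹) i j := by
      rw [← Matrix.transpose_apply (N * M⁻¹) i j, hZ't]
    simp [Matrix.conjTranspose_apply, Matrix.map_apply, hsymm]
  · intro x hx
    set xc : Fin n → ℂ := fun i => (x i : ℂ) with hxcdef
    have hxc : xc ≠ 0 := by
      intro h
      apply hx
      funext i
      have := congrFun h i
      simpa [hxcdef, Complex.ofReal_eq_zero] using this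
    set u : Fin n → ℂ := M⁻¹ *ᵥ xc with hu_def
    have hu : u ≠ 0 := by
      intro h
      apply hxc
      have hMu : M *ᵥ u = xc := by
        rw [hu_def, Matrix.mulVec_mulVec, hMM, Matrix.one_mulVec]
      rw [h, Matrix.mulVec_zero] at hMu
      exact hMu.symm
    have hpos := sieg_re_pos hY u hu
    have hquad : star xc ⬝ᵥ (Wm *ᵥ xc) = star u ⬝ᵥ (Yc *ᵥ u) := by
      rw [hWm, ← Matrix.mulVec_mulVec, ← Matrix.mulVec_mulVec,
        Matrix.dotProduct_mulVec, ← Matrix.star_mulVec, ← hu_def]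
    have hval : x ⬝ᵥ ((N * M⁻¹).map Complex.im *ᵥ x)
        = (star xc ⬝ᵥ (Wm *ᵥ xc)).re := by
      rw [← himW, sieg_re_quad]
      simp [hxcdef]
    simpa [hval, hquad, hYc, star_trivial] using hpos
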